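/- For real x > 8, log*(x²) + 1/2 ≤ log*(2^x), where log* denotes the modified iterated binary logarithm taking half-integer values: log* ℓ = t on the interval (tower(t-1), tower'(t)] and log* ℓ = t + 1/2 on (tower'(t), tower(t)], where tower(t) is the tower of 2s of height t and tower'(t) is the tower of height t with the topmost 2 replaced by 3. -/

import Mathlib

/-- For real `x > 8`, `log*(x²) + 1/2 ≤ log*(2^x)`, where `log*` is the modified
iterated binary logarithm taking half-integer values: with `tower t` the tower of
2s of height `t` and `split t` the splitting point of the interval
`(tower (t-1), tower t]` (obtained by replacing the topmost 2 of `tower (t-1)`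
by a 3), we have `log* x = t` on `(tower (t-1), split t]` and `log* x = t + 1/2`
on `(split t, tower t]`. -/
theorem stmt10 (tower split : ℕ → ℕ)
    (htower0 : tower 0 = 1)
    (htowerS : ∀ t : ℕ, tower (t + 1) = 2 ^ tower t)
    (hsplit1 : split 1 = 2)
    (hsplit2 : split 2 = 3)
    (hsplitS : ∀ t : ℕ, 2 ≤ t → split (t + 1) = 2 ^ split t)
    (logStar : ℝ → ℝ)
    (hfirst : ∀ t : ℕ, 1 ≤ t → ∀ x : ℝ,
      (tower (t - 1) : ℝ) < x → x ≤ (split t : ℝ) → logStar x = (t : ℝ))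
    (hsecond : ∀ t : ℕ, 1 ≤ t → ∀ x : ℝ,
      (split t : ℝ) < x → x ≤ (tower t : ℝ) → logStar x = (t : ℝ) + 1 / 2) :
    ∀ x : ℝ, 8 < x → logStar (x ^ 2) + 1 / 2 ≤ logStar ((2 : ℝ) ^ x) := by
  intro x hx
  have htow_pos : ∀ n, 1 ≤ tower n := by
    intro n
    induction n with
    | zero => rw [htower0]
    | succ k ih => rw [htowerS]; exact Nat.one_le_two_pow
  have hAB : ∀ s : ℕ, tower s < split (s + 1) ∧ split (s + 1) ≤ tower (s + 1) := by
    intro s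
    induction s with
    | zero =>
      constructor
      · rw [htower0, hsplit1]; norm_num
      · rw [hsplit1, htowerS 0, htower0]; norm_num
    | succ k ih =>
      rcases Nat.eq_zero_or_pos k with rfl | hk
      · constructor
        · rw [htowerS 0, htower0, hsplit2]; norm_num
        · rw [hsplit2, htowerS 1, htowerS 0, htower0]; norm_num
      · have hk1 : 2 ≤ k + 1 := by omega
        constructor
        · rw [hsplitS (k + 1) hk1, htowerS k]
          exact Nat.pow_lt_pow_right one_lt_two ih.1
        · rw [hsplitS (k + 1) hk1, htowerS (k + 1)]
          exact Nat.pow_le_pow_right (by norm_num) ih.2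
  have hsp : ∀ n, 1 ≤ split (n + 1) := fun n =>
    le_trans (htow_pos n) (le_of_lt (hAB n).1)
  have htower2 : tower 2 = 4 := by
    rw [htowerS 1, htowerS 0, htower0]; norm_num
  have hsplit3 : split 3 = 8 := by
    rw [hsplitS 2 le_rfl, hsplit2]; norm_num
  have htower3 : tower 3 = 16 := by
    rw [htowerS 2, htower2]; norm_num
  have keyA0 : ∀ s, 2 ≤ s → 2 * tower s ≤ split (s + 1) := by
    intro s hs
    induction s, hs using Nat.le_induction with
    | base => rw [htower2, hsplit3]
    | succ n hn ih =>
      rw [hsplitS (n + 1) (by omega), htowerS n]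
      have h1 : 1 ≤ tower n := htow_pos n
      calc 2 * 2 ^ tower n = 2 ^ (tower n + 1) := by rw [pow_succ, Nat.mul_comm]
        _ ≤ 2 ^ split (n + 1) := Nat.pow_le_pow_right (by norm_num) (by omega)
  have keyB0 : ∀ s, 3 ≤ s → 2 * split s ≤ tower s := by
    intro s hs
    induction s, hs using Nat.le_induction with
    | base => rw [hsplit3, htower3]
    | succ n hn ih =>
      rw [hsplitS n (by omega), htowerS n]
      have h1 : 1 ≤ split n := by
        obtain ⟨m, rfl⟩ : ∃ m, n = m + 1 := ⟨n - 1, by omega⟩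
        exact hsp m
      calc 2 * 2 ^ split n = 2 ^ (split n + 1) := by rw [pow_succ, Nat.mul_comm]
        _ ≤ 2 ^ tower n := Nat.pow_le_pow_right (by norm_num) (by omega)
  have keyA' : ∀ s, 2 ≤ s → tower (s + 1) ^ 2 ≤ split (s + 2) := by
    intro s hs
    rw [htowerS s, hsplitS (s + 1) (by omega)]
    calc (2 ^ tower s) ^ 2 = 2 ^ (tower s * 2) := by rw [pow_mul]
      _ ≤ 2 ^ split (s + 1) := by
          refine Nat.pow_le_pow_right (by norm_num) ?_
          have := keyA0 s hs; omega
  have keyB' : ∀ s, 3 ≤ s → split (s + 1) ^ 2 ≤ tower (s + 1) := by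
    intro s hs
    rw [hsplitS s (by omega), htowerS s]
    calc (2 ^ split s) ^ 2 = 2 ^ (split s * 2) := by rw [pow_mul]
      _ ≤ 2 ^ tower s := by
          refine Nat.pow_le_pow_right (by norm_num) ?_
          have := keyB0 s hs; omega
  have hltn : ∀ n : ℕ, n < tower n := by
    intro n
    induction n with
    | zero => rw [htower0]; norm_num
    | succ k ih =>
      rw [htowerS]
      calc k + 1 ≤ tower k := ih
        _ < 2 ^ tower k := Nat.lt_two_pow_self
  have hcast : ∀ m : ℕ, ((2 ^ m : ℕ) : ℝ) = (2 : ℝ) ^ (m : ℝ) := by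
    intro m; push_cast; rw [Real.rpow_natCast]
  have hex : ∃ n, x ≤ (tower n : ℝ) := by
    refine ⟨⌈x⌉₊, (Nat.le_ceil x).trans ?_⟩
    exact_mod_cast (hltn ⌈x⌉₊).le
  classical
  have hxT : x ≤ (tower (Nat.find hex) : ℝ) := Nat.find_spec hex
  have hT3 : 3 ≤ Nat.find hex := by
    by_contra h
    push_neg at h
    have hle : tower (Nat.find hex) ≤ tower 2 := by
      have hmono : StrictMono tower := by
        refine strictMono_nat_of_lt_succ fun n => ?_
        rw [htowerS]; exact Nat.lt_two_pow_self
      exact hmono.monotone (by omega)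
    have : x ≤ 4 := by
      refine hxT.trans ?_
      have : tower (Nat.find hex) ≤ 4 := by rw [htower2] at hle; exact hle
      exact_mod_cast this
    linarith
  obtain ⟨s, hTs⟩ : ∃ s, Nat.find hex = s + 1 := ⟨Nat.find hex - 1, by omega⟩
  rw [hTs] at hxT
  have hs2 : 2 ≤ s := by omega
  have hlow : (tower s : ℝ) < x := by
    have h := Nat.find_min hex (show s < Nat.find hex by omega)
    push_neg at h; exact h
  have hx0 : (0 : ℝ) ≤ x := by linarith
  have hx1 : (1 : ℝ) ≤ x := by linarith
  have hxsq : x ≤ x ^ 2 := le_self_pow₀ hx1 two_ne_zero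
  by_cases hxs : x ≤ (split (s + 1) : ℝ)
  · -- first half: tower s < x ≤ split (s+1)
    have hs3 : 3 ≤ s := by
      rcases eq_or_lt_of_le hs2 with h | h
      · exfalso
        rw [← h, hsplit3] at hxs
        norm_num at hxs; linarith
      · omega
    have l2 : logStar ((2 : ℝ) ^ x) = ((s + 2 : ℕ) : ℝ) := by
      refine hfirst (s + 2) (by omega) _ ?_ ?_
      · show ((tower (s + 1) : ℕ) : ℝ) < (2 : ℝ) ^ x
        rw [htowerS s, hcast]
        exact Real.rpow_lt_rpow_of_exponent_lt one_lt_two hlow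
      · rw [hsplitS (s + 1) (by omega), hcast]
        exact Real.rpow_le_rpow_of_exponent_le (by norm_num) hxs
    have hsqlow : (tower s : ℝ) < x ^ 2 := lt_of_lt_of_le hlow hxsq
    by_cases hsq : x ^ 2 ≤ (split (s + 1) : ℝ)
    · have l1 : logStar (x ^ 2) = ((s + 1 : ℕ) : ℝ) :=
        hfirst (s + 1) (by omega) _ hsqlow hsq
      rw [l1, l2]; push_cast; linarith
    · push_neg at hsq
      have hub : x ^ 2 ≤ (tower (s + 1) : ℝ) := by
        calc x ^ 2 ≤ ((split (s + 1) : ℕ) : ℝ) ^ 2 := by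
              exact pow_le_pow_left₀ hx0 hxs 2
          _ = ((split (s + 1) ^ 2 : ℕ) : ℝ) := by push_cast; ring
          _ ≤ ((tower (s + 1) : ℕ) : ℝ) := by exact_mod_cast keyB' s hs3
      have l1 : logStar (x ^ 2) = ((s + 1 : ℕ) : ℝ) + 1 / 2 :=
        hsecond (s + 1) (by omega) _ hsq hub
      rw [l1, l2]; push_cast; linarith
  · -- second half: split (s+1) < x ≤ tower (s+1)
    push_neg at hxs
    have l2 : logStar ((2 : ℝ) ^ x) = ((s + 2 : ℕ) : ℝ) + 1 / 2 := by
      refine hsecond (s + 2) (by omega) _ ?_ ?_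
      · rw [hsplitS (s + 1) (by omega), hcast]
        exact Real.rpow_lt_rpow_of_exponent_lt one_lt_two hxs
      · show (2 : ℝ) ^ x ≤ ((tower (s + 2) : ℕ) : ℝ)
        rw [htowerS (s + 1), hcast]
        exact Real.rpow_le_rpow_of_exponent_le (by norm_num) hxT
    have hsqlow : (split (s + 1) : ℝ) < x ^ 2 := lt_of_lt_of_le hxs hxsq
    by_cases hsq : x ^ 2 ≤ (tower (s + 1) : ℝ)
    · have l1 : logStar (x ^ 2) = ((s + 1 : ℕ) : ℝ) + 1 / 2 :=
        hsecond (s + 1) (by omega) _ hsqlow hsq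
      rw [l1, l2]; push_cast; linarith
    · push_neg at hsq
      have hub : x ^ 2 ≤ (split (s + 2) : ℝ) := by
        calc x ^ 2 ≤ ((tower (s + 1) : ℕ) : ℝ) ^ 2 := by
              exact pow_le_pow_left₀ hx0 hxT 2
          _ = ((tower (s + 1) ^ 2 : ℕ) : ℝ) := by push_cast; ring
          _ ≤ ((split (s + 2) : ℕ) : ℝ) := by exact_mod_cast keyA' s hs2
      have l1 : logStar (x ^ 2) = ((s + 2 : ℕ) : ℝ) :=
        hfirst (s + 2) (by omega) _ hsq hub
      rw [l1, l2]
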